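/- Let 1 → N → G → Γ → 1 be a short exact sequence of groups. Then genrk(G) ≤ genrk(N) + genrk(Γ). -/

import Mathlib

open scoped commutatorElement

/-- The mixed commutator length `cl_{G,N}` (∞ if not a product of mixed commutators). -/
noncomputable def clGN {G : Type*} [Group G] (N : Subgroup G) (x : G) : ℕ∞ :=
  sInf {n : ℕ∞ | ∃ k : ℕ, n = k ∧ ∃ g v : Fin k → G, (∀ i, v i ∈ N) ∧
    x = (List.ofFn fun i => ⁅g i, v i⁆).prod}

/-- The rank of a subgroup: minimal size of a generating set. -/
noncomputable def rk {G : Type*} [Group G] (H : Subgroup G) : ℕ∞ :=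
  sInf {n : ℕ∞ | ∃ S : Finset G, Subgroup.closure (S : Set G) = H ∧ n = S.card}

/-- The intermediate rank `intrk^Γ(Λ) = inf {rk Θ | Λ ≤ Θ ≤ Γ}`. -/
noncomputable def intrk {G : Type*} [Group G] (Λ : Subgroup G) : ℕ∞ :=
  sInf {n : ℕ∞ | ∃ Θ : Subgroup G, Λ ≤ Θ ∧ n = rk Θ}

/-- The general rank in the sense of Malcev. -/
noncomputable def genrk (G : Type*) [Group G] : ℕ∞ :=
  sSup {n : ℕ∞ | ∃ Λ : Subgroup G, Λ.FG ∧ n = intrk Λ}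

/-- The special rank in the sense of Malcev. -/
noncomputable def sperk (G : Type*) [Group G] : ℕ∞ :=
  sSup {n : ℕ∞ | ∃ Λ : Subgroup G, Λ.FG ∧ n = rk Λ}

lemma intrk_attained {G : Type*} [Group G] (Λ : Subgroup G) :
    ∃ Θ : Subgroup G, Λ ≤ Θ ∧ intrk Λ = rk Θ := by
  have hne : {n : ℕ∞ | ∃ Θ : Subgroup G, Λ ≤ Θ ∧ n = rk Θ}.Nonempty := ⟨rk ⊤, ⊤, le_top, rfl⟩
  exact csInf_mem hne

lemma rk_attained {G : Type*} [Group G] {H : Subgroup G} (h : rk H ≠ ⊤) :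
    ∃ S : Finset G, Subgroup.closure (S : Set G) = H ∧ rk H = S.card := by
  have hne : {n : ℕ∞ | ∃ S : Finset G, Subgroup.closure (S : Set G) = H ∧ n = S.card}.Nonempty := by
    by_contra hc
    rw [Set.not_nonempty_iff_eq_empty] at hc
    exact h (by rw [rk, hc, sInf_empty])
  exact csInf_mem hne

lemma intrk_le_genrk {G : Type*} [Group G] {Λ : Subgroup G} (h : Λ.FG) :
    intrk Λ ≤ genrk G :=
  le_sSup ⟨Λ, h, rfl⟩

/-- general rank is subadditive in short exact sequences. -/
theorem genrk_le_add_of_exact {N G Γ : Type*} [Group N] [Group G] [Group Γ]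
    (i : N →* G) (q : G →* Γ) (hi : Function.Injective i) (hq : Function.Surjective q)
    (hker : i.range = q.ker) :
    genrk G ≤ genrk N + genrk Γ := by
  classical
  rcases eq_top_or_lt_top (genrk N) with hN | hN
  · rw [hN, top_add]; exact le_top
  rcases eq_top_or_lt_top (genrk Γ) with hΓ | hΓ
  · rw [hΓ, add_top]; exact le_top
  apply sSup_le
  rintro n ⟨Λ, hfg, rfl⟩
  obtain ⟨S, hS⟩ := hfg
  -- the image of Λ in Γ
  have hfgmap : (Λ.map q).FG := ⟨S.image q, by
    rw [Finset.coe_image, ← MonoidHom.map_closure, hS]⟩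
  obtain ⟨Θ, hΛΘ, hΘ⟩ := intrk_attained (Λ.map q)
  have hrkΘ : rk Θ ≤ genrk Γ := hΘ ▸ intrk_le_genrk hfgmap
  obtain ⟨T, hT, hTcard⟩ := rk_attained (fun h => absurd (h ▸ hrkΘ) (by simpa using hΓ.ne))
  -- lift generators of Θ
  set gl : Γ → G := Function.surjInv hq with hgl
  have hglq : ∀ t, q (gl t) = t := Function.surjInv_eq hq
  set L : Subgroup G := Subgroup.closure ((T.image gl : Finset G) : Set G) with hL
  have hLmap : Θ ≤ L.map q := by
    rw [← hT]
    apply Subgroup.closure_le _ |>.mpr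
    intro t ht
    exact ⟨gl t, Subgroup.subset_closure (by simp [Finset.mem_image]; exact ⟨t, ht, rfl⟩), hglq t⟩
  -- for each s ∈ S, write s = i n * f with f ∈ L
  have key : ∀ s : G, ∃ fn : G × N, s ∈ (S : Set G) → fn.1 ∈ L ∧ s = i fn.2 * fn.1 := by
    intro s
    by_cases hs : s ∈ (S : Set G)
    · have hqs : q s ∈ Θ := hΛΘ ⟨s, hS ▸ Subgroup.subset_closure hs, rfl⟩
      obtain ⟨f, hfL, hfq⟩ := hLmap hqs
      have hkf : s * f⁻¹ ∈ q.ker := by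
        rw [MonoidHom.mem_ker, map_mul, map_inv, hfq, mul_inv_eq_one]
      rw [← hker] at hkf
      obtain ⟨m, hm⟩ := hkf
      exact ⟨(f, m), fun _ => ⟨hfL, by rw [hm]; group⟩⟩
    · exact ⟨(1, 1), fun h => absurd h hs⟩
  choose fn hfn using key
  set U0 : Finset N := S.image (fun s => (fn s).2) with hU0
  have hMfg : (Subgroup.closure ((U0 : Finset N) : Set N)).FG := ⟨U0, rfl⟩
  obtain ⟨Ψ, hMΨ, hΨ⟩ := intrk_attained (Subgroup.closure ((U0 : Finset N) : Set N))
  have hrkΨ : rk Ψ ≤ genrk N := hΨ ▸ intrk_le_genrk hMfg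
  obtain ⟨U, hU, hUcard⟩ := rk_attained (fun h => absurd (h ▸ hrkΨ) (by simpa using hN.ne))
  -- the intermediate subgroup
  set ΘG : Subgroup G := Subgroup.closure ((T.image gl ∪ U.image i : Finset G) : Set G) with hΘG
  have hLsub : L ≤ ΘG := Subgroup.closure_mono (by simp [Finset.coe_union])
  have hΨsub : Ψ.map i ≤ ΘG := by
    rw [← hU, MonoidHom.map_closure]
    apply Subgroup.closure_mono
    rw [← Finset.coe_image]
    simp [Finset.coe_union]
  have hΛΘG : Λ ≤ ΘG := by
    rw [← hS]
    apply Subgroup.closure_le _ |>.mpr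
    intro s hs
    obtain ⟨hfL, heq⟩ := hfn s hs
    rw [heq]
    refine mul_mem (hΨsub ⟨(fn s).2, ?_, rfl⟩) (hLsub hfL)
    exact hMΨ (Subgroup.subset_closure (by simp [hU0, Finset.mem_image]; exact ⟨s, hs, rfl⟩))
  calc intrk Λ ≤ rk ΘG := sInf_le ⟨ΘG, hΛΘG, rfl⟩
    _ ≤ ((T.image gl ∪ U.image i).card : ℕ∞) := sInf_le ⟨_, rfl, rfl⟩
    _ ≤ (U.card : ℕ∞) + T.card := by
        rw [← Nat.cast_add]
        apply Nat.cast_le.mpr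
        calc (T.image gl ∪ U.image i).card ≤ (T.image gl).card + (U.image i).card :=
              Finset.card_union_le _ _
          _ ≤ T.card + U.card := add_le_add (Finset.card_image_le) (Finset.card_image_le)
          _ = U.card + T.card := Nat.add_comm _ _
    _ ≤ genrk N + genrk Γ := add_le_add (hUcard ▸ hrkΨ) (hTcard ▸ hrkΘ)
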